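/- arXiv:1507.00266 — 2 statements merged into one kernel-verified Lean document; each statement's English description precedes it below -/
import Mathlib

section
/- Let W : GL⁺(2) → ℝ be objective, isotropic and isochoric, and let h : (0,∞) → ℝ be defined by h(t) = W(diag(t,1)). If h is continuously differentiable on (0,∞), then W is polyconvex if and only if h is convex on [1,∞). -/
open Matrix Set

noncomputable section

/-- The space of real 2×2 matrices. -/
abbrev Mat2 : Type := Matrix (Fin 2) (Fin 2) ℝ

/-- The special orthogonal group SO(2): orthogonal 2×2 matrices with determinant 1. -/
def SO2 : Set Mat2 := {Q : Mat2 | Qᵀ * Q = 1 ∧ Q.det = 1}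

/-- A function `W` (viewed on GL⁺(2) = {F | 0 < det F}) is polyconvex if there is a
convex function `P : ℝ^{2×2} × ℝ → ℝ ∪ {+∞}` with `W F = P (F, det F)` on GL⁺(2). -/
def Polyconvex (W : Mat2 → ℝ) : Prop :=
  ∃ P : Mat2 × ℝ → EReal,
    (∀ x y : Mat2 × ℝ, ∀ a b : ℝ, 0 ≤ a → 0 ≤ b → a + b = 1 →
      P (a • x + b • y) ≤ (a : EReal) * P x + (b : EReal) * P y) ∧
    (∀ F : Mat2, 0 < F.det → (W F : EReal) = P (F, F.det))

/-- Rank-one convexity of `W` on GL⁺(2): convexity along rank-one line segments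
lying in GL⁺(2). -/
def RankOneConvex (W : Mat2 → ℝ) : Prop :=
  ∀ F : Mat2, 0 < F.det → ∀ ξ η : Fin 2 → ℝ, ∀ θ : ℝ, θ ∈ Set.Icc (0:ℝ) 1 →
    (∀ t ∈ Set.Icc (0:ℝ) 1, 0 < (F + t • vecMulVec ξ η).det) →
    W (F + (1 - θ) • vecMulVec ξ η) ≤ θ * W F + (1 - θ) * W (F + vecMulVec ξ η)

/-- Objectivity and isotropy: bi-SO(2)-invariance on GL⁺(2). -/
def ObjectiveIsotropic (W : Mat2 → ℝ) : Prop :=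
  ∀ F : Mat2, 0 < F.det → ∀ Q₁ Q₂ : Mat2, Q₁ ∈ SO2 → Q₂ ∈ SO2 →
    W (Q₁ * F * Q₂) = W F

/-- Isochoric: invariance under positive scaling on GL⁺(2). -/
def Isochoric (W : Mat2 → ℝ) : Prop :=
  ∀ F : Mat2, 0 < F.det → ∀ a : ℝ, 0 < a → W (a • F) = W F

/-- The 2×2 diagonal matrix diag(a, b). -/
def diag2 (a b : ℝ) : Mat2 := !![a, 0; 0, b]

/-- The squared Frobenius norm of a 2×2 matrix. -/
def frobSq (F : Mat2) : ℝ := ∑ i, ∑ j, (F i j) ^ 2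

/-- The operator norm of `F` induced by the Euclidean norm on ℝ²:
the supremum of ‖F·x‖ over Euclidean-unit vectors x. -/
def opNorm2 (F : Mat2) : ℝ :=
  sSup {r : ℝ | ∃ x : Fin 2 → ℝ, (x 0) ^ 2 + (x 1) ^ 2 = 1 ∧
    r = Real.sqrt ((F.mulVec x 0) ^ 2 + (F.mulVec x 1) ^ 2)}

/-! ### Auxiliary material -/

/-- A rotation-like matrix. -/
def rot (c s : ℝ) : Mat2 := !![c, -s; s, c]

lemma rot_mem_SO2 {c s : ℝ} (h : c^2 + s^2 = 1) : rot c s ∈ SO2 := by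
  constructor
  · ext i j
    fin_cases i <;> fin_cases j <;>
      simp [rot, Matrix.mul_apply, Fin.sum_univ_two, Matrix.one_apply, Matrix.transpose_apply,
        Matrix.vecHead, Matrix.vecTail] <;>
      nlinarith [h]
  · simp [rot, Matrix.det_fin_two_of]; nlinarith [h]

lemma diag2_det (a b : ℝ) : (diag2 a b).det = a * b := by
  simp [diag2, Matrix.det_fin_two_of]

lemma rot_diag_rot (c1 s1 c2 s2 a b : ℝ) :
    rot c1 s1 * diag2 a b * rot c2 s2 =
      !![a*c1*c2 - b*s1*s2, -(a*c1*s2) - b*s1*c2;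
         a*s1*c2 + b*c1*s2, -(a*s1*s2) + b*c1*c2] := by
  ext i j
  fin_cases i <;> fin_cases j <;>
    simp [rot, diag2, Matrix.mul_apply, Fin.sum_univ_two] <;> ring

/-- `NN F` equals the largest singular value of `F` (when `det F > 0`). -/
def NN (F : Mat2) : ℝ :=
  Real.sqrt (((F 0 0 + F 1 1)/2)^2 + ((F 1 0 - F 0 1)/2)^2) +
  Real.sqrt (((F 0 0 - F 1 1)/2)^2 + ((F 1 0 + F 0 1)/2)^2)

/-- polar coordinates for a point of the plane -/
lemma polar (x y : ℝ) : ∃ θ : ℝ,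
    x = Real.sqrt (x^2 + y^2) * Real.cos θ ∧ y = Real.sqrt (x^2 + y^2) * Real.sin θ := by
  by_cases h : (⟨x, y⟩ : ℂ) = 0
  · have hx : x = 0 := congrArg Complex.re h
    have hy : y = 0 := congrArg Complex.im h
    exact ⟨0, by simp [hx, hy]⟩
  · refine ⟨Complex.arg ⟨x, y⟩, ?_, ?_⟩
    · have := Complex.cos_arg h
      have habs : ‖(⟨x, y⟩ : ℂ)‖ = Real.sqrt (x^2 + y^2) := by
        rw [Complex.norm_def, Complex.normSq_mk]; ring_nf
      have hpos : (0:ℝ) < ‖(⟨x, y⟩ : ℂ)‖ := by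
        simpa using (norm_pos_iff.mpr h)
      rw [habs] at this hpos
      field_simp at this
      simpa [mul_comm] using this.symm
    · have := Complex.sin_arg ⟨x, y⟩
      have habs : ‖(⟨x, y⟩ : ℂ)‖ = Real.sqrt (x^2 + y^2) := by
        rw [Complex.norm_def, Complex.normSq_mk]; ring_nf
      have hpos : (0:ℝ) < ‖(⟨x, y⟩ : ℂ)‖ := by
        simpa using (norm_pos_iff.mpr h)
      rw [habs] at this hpos
      field_simp at this
      simpa [mul_comm] using this.symm

/-- Explicit singular value decomposition of a 2×2 matrix with positive determinant. -/
lemma svd2 (F : Mat2) (hF : 0 < F.det) :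
    ∃ c1 s1 c2 s2 a b : ℝ, c1^2+s1^2 = 1 ∧ c2^2+s2^2 = 1 ∧ 0 < b ∧ b ≤ a ∧
      F = rot c1 s1 * diag2 a b * rot c2 s2 ∧ NN F = a ∧ F.det = a * b := by
  set p := (F 0 0 + F 1 1)/2 with hp
  set q := (F 1 0 - F 0 1)/2 with hq
  set u := (F 0 0 - F 1 1)/2 with hu
  set v := (F 1 0 + F 0 1)/2 with hv
  set rA := Real.sqrt (p^2 + q^2) with hrA
  set rB := Real.sqrt (u^2 + v^2) with hrB
  have hdet : F.det = rA^2 - rB^2 := by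
    rw [Matrix.det_fin_two, hrA, hrB, Real.sq_sqrt (by positivity), Real.sq_sqrt (by positivity),
      hp, hq, hu, hv]
    ring
  have hrA0 : 0 ≤ rA := Real.sqrt_nonneg _
  have hrB0 : 0 ≤ rB := Real.sqrt_nonneg _
  have hBA : rB < rA := by nlinarith [hdet, hF]
  obtain ⟨θA, hpA, hqA⟩ := polar p q
  obtain ⟨θB, huB, hvB⟩ := polar u v
  rw [← hrA] at hpA hqA
  rw [← hrB] at huB hvB
  set c1 := Real.cos ((θA+θB)/2) with hc1
  set s1 := Real.sin ((θA+θB)/2) with hs1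
  set c2 := Real.cos ((θA-θB)/2) with hc2
  set s2 := Real.sin ((θA-θB)/2) with hs2
  have hAe : θA = (θA+θB)/2 + (θA-θB)/2 := by ring
  have hBe : θB = (θA+θB)/2 - (θA-θB)/2 := by ring
  have hpA' : p = rA * (c1*c2 - s1*s2) := by
    rw [hpA, hAe, Real.cos_add]
  have hqA' : q = rA * (s1*c2 + c1*s2) := by
    rw [hqA, hAe, Real.sin_add]
  have huB' : u = rB * (c1*c2 + s1*s2) := by
    rw [huB, hBe, Real.cos_sub]
  have hvB' : v = rB * (s1*c2 - c1*s2) := by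
    rw [hvB, hBe, Real.sin_sub]
  refine ⟨c1, s1, c2, s2, rA + rB, rA - rB,
    by rw [hc1, hs1, Real.cos_sq_add_sin_sq],
    by rw [hc2, hs2, Real.cos_sq_add_sin_sq],
    by linarith, by linarith, ?_, ?_, by rw [hdet]; ring⟩
  · have h00 : F 0 0 = p + u := by rw [hp, hu]; ring
    have h01 : F 0 1 = v - q := by rw [hq, hv]; ring
    have h10 : F 1 0 = q + v := by rw [hq, hv]; ring
    have h11 : F 1 1 = p - u := by rw [hp, hu]; ring
    rw [rot_diag_rot, Matrix.eta_fin_two F, h00, h01, h10, h11]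
    congr 1
    ext i j
    fin_cases i <;> fin_cases j <;> simp
    · linear_combination hpA' + huB'
    · linear_combination hvB' - hqA'
    · linear_combination hqA' + hvB'
    · linear_combination hpA' - huB'
  · unfold NN
    rw [← hp, ← hq, ← hu, ← hv, ← hrA, ← hrB]

lemma sqrt_comb (a b x1 y1 x2 y2 : ℝ) (ha : 0 ≤ a) (hb : 0 ≤ b) :
    Real.sqrt ((a*x1 + b*x2)^2 + (a*y1 + b*y2)^2) ≤
      a * Real.sqrt (x1^2 + y1^2) + b * Real.sqrt (x2^2 + y2^2) := by
  have h1 := Real.sqrt_nonneg (x1^2 + y1^2)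
  have h2 := Real.sqrt_nonneg (x2^2 + y2^2)
  have e1 := Real.sq_sqrt (show (0:ℝ) ≤ x1^2+y1^2 by positivity)
  have e2 := Real.sq_sqrt (show (0:ℝ) ≤ x2^2+y2^2 by positivity)
  have cross : x1*x2 + y1*y2 ≤ Real.sqrt (x1^2+y1^2) * Real.sqrt (x2^2+y2^2) := by
    nlinarith [sq_nonneg (x1*y2 - x2*y1),
      sq_nonneg (Real.sqrt (x1^2+y1^2) * Real.sqrt (x2^2+y2^2) - x1*x2 - y1*y2),
      sq_nonneg (Real.sqrt (x1^2+y1^2) * Real.sqrt (x2^2+y2^2) + x1*x2 + y1*y2),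
      mul_nonneg h1 h2]
  rw [show a * Real.sqrt (x1^2 + y1^2) + b * Real.sqrt (x2^2 + y2^2)
      = Real.sqrt ((a * Real.sqrt (x1^2 + y1^2) + b * Real.sqrt (x2^2 + y2^2))^2) from
      (Real.sqrt_sq (by positivity)).symm]
  apply Real.sqrt_le_sqrt
  have key : ∀ s1 s2 : ℝ, 0 ≤ s1 → 0 ≤ s2 → s1^2 = x1^2+y1^2 → s2^2 = x2^2+y2^2 →
      x1*x2+y1*y2 ≤ s1*s2 → (a*x1+b*x2)^2+(a*y1+b*y2)^2 ≤ (a*s1+b*s2)^2 := by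
    intro s1 s2 _ _ f1 f2 fc
    have g1 : a^2*s1^2 = a^2*(x1^2+y1^2) := by rw [f1]
    have g2 : b^2*s2^2 = b^2*(x2^2+y2^2) := by rw [f2]
    nlinarith [g1, g2, mul_le_mul_of_nonneg_left fc (mul_nonneg ha hb)]
  exact key _ _ h1 h2 e1 e2 cross

lemma NN_nonneg (F : Mat2) : 0 ≤ NN F := by
  unfold NN; positivity

lemma NN_comb (F G : Mat2) (a b : ℝ) (ha : 0 ≤ a) (hb : 0 ≤ b) :
    NN (a • F + b • G) ≤ a * NN F + b * NN G := by
  unfold NN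
  have e : ∀ i j : Fin 2, (a • F + b • G) i j = a * F i j + b * G i j := by
    intro i j; simp [Matrix.add_apply, Matrix.smul_apply, smul_eq_mul]
  rw [e 0 0, e 1 1, e 1 0, e 0 1]
  have c1 := sqrt_comb a b ((F 0 0 + F 1 1)/2) ((F 1 0 - F 0 1)/2)
    ((G 0 0 + G 1 1)/2) ((G 1 0 - G 0 1)/2) ha hb
  have c2 := sqrt_comb a b ((F 0 0 - F 1 1)/2) ((F 1 0 + F 0 1)/2)
    ((G 0 0 - G 1 1)/2) ((G 1 0 + G 0 1)/2) ha hb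
  have r1 : (a * F 0 0 + b * G 0 0 + (a * F 1 1 + b * G 1 1))/2
      = a * ((F 0 0 + F 1 1)/2) + b * ((G 0 0 + G 1 1)/2) := by ring
  have r2 : (a * F 1 0 + b * G 1 0 - (a * F 0 1 + b * G 0 1))/2
      = a * ((F 1 0 - F 0 1)/2) + b * ((G 1 0 - G 0 1)/2) := by ring
  have r3 : (a * F 0 0 + b * G 0 0 - (a * F 1 1 + b * G 1 1))/2
      = a * ((F 0 0 - F 1 1)/2) + b * ((G 0 0 - G 1 1)/2) := by ring
  have r4 : (a * F 1 0 + b * G 1 0 + (a * F 0 1 + b * G 0 1))/2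
      = a * ((F 1 0 + F 0 1)/2) + b * ((G 1 0 + G 0 1)/2) := by ring
  rw [r1, r2, r3, r4]
  linarith [c1, c2]

lemma mono_aux (h : ℝ → ℝ) (hconv : ConvexOn ℝ (Ici 1) h) (hder : HasDerivAt h 0 1) :
    MonotoneOn h (Ici (1:ℝ)) := by
  have base : ∀ t : ℝ, 1 < t → h 1 ≤ h t := by
    intro t ht
    have htend : Filter.Tendsto (slope h 1) (nhdsWithin 1 (Ioi 1)) (nhds 0) :=
      (hasDerivAt_iff_tendsto_slope.mp hder).mono_left
        (nhdsWithin_mono 1 (fun x hx => ne_of_gt hx))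
    have hev : ∀ᶠ s in nhdsWithin 1 (Ioi 1), slope h 1 s ≤ slope h 1 t := by
      filter_upwards [Ioo_mem_nhdsGT_of_mem (Set.left_mem_Ico.mpr ht)] with s hs
      have := hconv.secant_mono (Set.self_mem_Ici)
        (le_of_lt hs.1 : s ∈ Ici (1:ℝ)) (le_of_lt (lt_trans hs.1 hs.2) : t ∈ Ici (1:ℝ))
        (ne_of_gt hs.1) (ne_of_gt (lt_trans hs.1 hs.2)) hs.2.le
      simpa [slope_def_field] using this
    have h0 : (0:ℝ) ≤ slope h 1 t := le_of_tendsto htend hev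
    rw [slope_def_field] at h0
    by_contra hcon
    push_neg at hcon
    have : (h t - h 1) / (t - 1) < 0 :=
      div_neg_of_neg_of_pos (by linarith) (by linarith)
    linarith
  intro x hx y hy hxy
  rcases eq_or_lt_of_le hxy with rfl|hlt
  · exact le_refl _
  have hy1 : 1 < y := lt_of_le_of_lt hx hlt
  rcases eq_or_lt_of_le (show (1:ℝ) ≤ x from hx) with h1x|h1x
  · rw [← h1x]; exact base y hy1
  have hden : (0:ℝ) < y - 1 := by linarith
  set θ := (y - x)/(y - 1) with hθ
  have hθ0 : 0 ≤ θ := div_nonneg (by linarith) (by linarith)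
  have hθ1 : 0 ≤ 1 - θ := by
    rw [hθ]; rw [sub_nonneg, div_le_one hden]; linarith
  have hcomb := hconv.2 Set.self_mem_Ici hy hθ0 hθ1 (by ring)
  have hxeq : θ • (1:ℝ) + (1 - θ) • y = x := by
    simp only [smul_eq_mul, mul_one, hθ]
    field_simp
    ring
  rw [hxeq] at hcomb
  have : θ * h 1 ≤ θ * h y := mul_le_mul_of_nonneg_left (base y hy1) hθ0
  simp only [smul_eq_mul] at hcomb
  nlinarith [hcomb, this]

lemma qol (a b N1 N2 d1 d2 : ℝ) (ha : 0 ≤ a) (hb : 0 ≤ b) (hd1 : 0 < d1) (hd2 : 0 < d2)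
    (hD : 0 < a*d1 + b*d2) :
    (a*N1 + b*N2)^2/(a*d1 + b*d2) ≤ a*(N1^2/d1) + b*(N2^2/d2) := by
  rw [div_le_iff₀ hD]
  have e1 : N1^2/d1 * d1 = N1^2 := by field_simp
  have e2 : N2^2/d2 * d2 = N2^2 := by field_simp
  have cross : 2*N1*N2 ≤ N1^2/d1*d2 + N2^2/d2*d1 := by
    have hrw : N1^2/d1*d2 + N2^2/d2*d1 - 2*N1*N2 = (N1*d2 - N2*d1)^2/(d1*d2) := by
      field_simp; ring
    nlinarith [div_nonneg (sq_nonneg (N1*d2 - N2*d1)) (le_of_lt (mul_pos hd1 hd2)), hrw]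
  have g1 : a^2*(N1^2/d1*d1) = a^2*N1^2 := by rw [e1]
  have g2 : b^2*(N2^2/d2*d2) = b^2*N2^2 := by rw [e2]
  nlinarith [g1, g2, mul_le_mul_of_nonneg_left cross (mul_nonneg ha hb)]

/-- for objective, isotropic, isochoric `W` with `h(t) = W(diag(t,1))`
continuously differentiable on `(0,∞)`, polyconvexity of `W` is equivalent to
convexity of `h` on `[1,∞)`. -/
theorem isochoric_polyconvex_iff_convexOn_Ici (W : Mat2 → ℝ)
    (hOI : ObjectiveIsotropic W) (hIso : Isochoric W)
    (hC1 : ContDiffOn ℝ 1 (fun t => W (diag2 t 1)) (Set.Ioi (0:ℝ))) :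
    Polyconvex W ↔ ConvexOn ℝ (Set.Ici (1:ℝ)) (fun t => W (diag2 t 1)) := by
  set h : ℝ → ℝ := fun t => W (diag2 t 1) with hh
  constructor
  · rintro ⟨P, hPc, hPeq⟩
    refine ⟨convex_Ici 1, ?_⟩
    intro x hx y hy a b ha hb hab
    simp only [smul_eq_mul]
    have hx0 : (0:ℝ) < x := lt_of_lt_of_le one_pos hx
    have hy0 : (0:ℝ) < y := lt_of_lt_of_le one_pos hy
    have hs0 : (0:ℝ) < a*x + b*y := by
      nlinarith [mul_le_mul_of_nonneg_left hx ha, mul_le_mul_of_nonneg_left hy hb]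
    have key := hPc (diag2 x 1, x) (diag2 y 1, y) a b ha hb hab
    have e1 : (h x : EReal) = P (diag2 x 1, x) := by
      have := hPeq (diag2 x 1) (by rw [diag2_det]; linarith)
      rwa [diag2_det, mul_one] at this
    have e2 : (h y : EReal) = P (diag2 y 1, y) := by
      have := hPeq (diag2 y 1) (by rw [diag2_det]; linarith)
      rwa [diag2_det, mul_one] at this
    have es : (h (a*x + b*y) : EReal) = P (diag2 (a*x + b*y) 1, a*x + b*y) := by
      have := hPeq (diag2 (a*x + b*y) 1) (by rw [diag2_det]; linarith)
      rwa [diag2_det, mul_one] at this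
    have hsum : a • ((diag2 x 1 : Mat2), x) + b • ((diag2 y 1 : Mat2), y)
        = ((diag2 (a*x + b*y) 1 : Mat2), a*x + b*y) := by
      refine Prod.ext ?_ ?_
      · show a • diag2 x 1 + b • diag2 y 1 = diag2 (a*x + b*y) 1
        unfold diag2
        ext i j
        fin_cases i <;> fin_cases j <;>
          simp [Matrix.add_apply, Matrix.smul_apply, smul_eq_mul] <;> linarith
      · simp [smul_eq_mul]
    rw [hsum, ← e1, ← e2, ← es] at key
    rw [show ((a:EReal) * ((h x : ℝ) : EReal) + (b:EReal) * ((h y : ℝ) : EReal))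
        = ((a * h x + b * h y : ℝ) : EReal) by
      rw [← EReal.coe_mul, ← EReal.coe_mul, ← EReal.coe_add]] at key
    exact_mod_cast key
  · intro hconv
    -- symmetry of h
    have hsym : ∀ t : ℝ, 0 < t → h t = h t⁻¹ := by
      intro t ht
      have hm1 : rot 0 1 ∈ SO2 := rot_mem_SO2 (by norm_num)
      have hm2 : rot 0 (-1) ∈ SO2 := rot_mem_SO2 (by norm_num)
      have hJ : rot 0 1 * diag2 t 1 * rot 0 (-1) = diag2 1 t := by
        rw [rot_diag_rot]; unfold diag2; norm_num
      have w1 : W (diag2 1 t) = W (diag2 t 1) := by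
        rw [← hJ]
        exact hOI (diag2 t 1) (by rw [diag2_det]; linarith) _ _ hm1 hm2
      have hscale : t • diag2 t⁻¹ 1 = diag2 1 t := by
        unfold diag2
        ext i j
        fin_cases i <;> fin_cases j <;> simp [Matrix.smul_apply, smul_eq_mul] <;> field_simp
      have w2 : W (diag2 1 t) = W (diag2 t⁻¹ 1) := by
        rw [← hscale]
        exact hIso (diag2 t⁻¹ 1) (by rw [diag2_det, mul_one]; positivity) t ht
      show h t = h t⁻¹
      rw [hh]
      simp only
      rw [← w1, w2]
    -- derivative of h at 1 is 0
    have hd1 : DifferentiableAt ℝ h 1 :=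
      ((hC1.differentiableOn one_ne_zero).differentiableAt
        (isOpen_Ioi.mem_nhds (by norm_num : (1:ℝ) ∈ Ioi (0:ℝ))))
    have hder : HasDerivAt h (deriv h 1) 1 := hd1.hasDerivAt
    have hder0 : HasDerivAt h 0 1 := by
      have hinv : HasDerivAt (fun t : ℝ => t⁻¹) (-1) 1 := by
        simpa using hasDerivAt_inv (one_ne_zero : (1:ℝ) ≠ 0)
      have hat : HasDerivAt h (deriv h 1) ((1:ℝ)⁻¹) := by rwa [inv_one]
      have hcomp : HasDerivAt (fun t : ℝ => h t⁻¹) (deriv h 1 * (-1)) 1 :=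
        HasDerivAt.comp 1 hat hinv
      have heq : (fun t : ℝ => h t) =ᶠ[nhds 1] (fun t : ℝ => h t⁻¹) := by
        filter_upwards [isOpen_Ioi.mem_nhds (by norm_num : (1:ℝ) ∈ Ioi (0:ℝ))] with t ht
        exact hsym t ht
      have hcomp' : HasDerivAt h (deriv h 1 * (-1)) 1 := hcomp.congr_of_eventuallyEq heq
      have : deriv h 1 * (-1) = deriv h 1 := hcomp'.unique hder
      have hz : deriv h 1 = 0 := by linarith
      rwa [hz] at hder
    have hmono : MonotoneOn h (Ici (1:ℝ)) := mono_aux h hconv hder0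
    -- the auxiliary function g
    set g : ℝ → ℝ := fun s => h (max s 1) with hg
    have hgmono : Monotone g := by
      intro s t hst
      exact hmono (le_max_right s 1) (le_max_right t 1) (max_le_max hst le_rfl)
    have hgconv : ∀ x y a b : ℝ, 0 ≤ a → 0 ≤ b → a + b = 1 →
        g (a*x + b*y) ≤ a * g x + b * g y := by
      intro x y a b ha hb hab
      have hmx : (1:ℝ) ≤ max x 1 := le_max_right _ _
      have hmy : (1:ℝ) ≤ max y 1 := le_max_right _ _
      have hone : (1:ℝ) ≤ a * max x 1 + b * max y 1 := by
        nlinarith [mul_le_mul_of_nonneg_left hmx ha, mul_le_mul_of_nonneg_left hmy hb]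
      have step1 : max (a*x + b*y) 1 ≤ a * max x 1 + b * max y 1 := by
        apply max_le
        · exact add_le_add (mul_le_mul_of_nonneg_left (le_max_left _ _) ha)
            (mul_le_mul_of_nonneg_left (le_max_left _ _) hb)
        · exact hone
      have step2 : h (max (a*x + b*y) 1) ≤ h (a * max x 1 + b * max y 1) :=
        hmono (Set.mem_Ici.mpr (le_max_right _ _)) hone step1
      have step3 := hconv.2 (hmx : max x 1 ∈ Ici (1:ℝ)) (hmy : max y 1 ∈ Ici (1:ℝ)) ha hb hab
      simp only [smul_eq_mul] at step3
      exact le_trans step2 step3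
    -- representation of W
    have hrep : ∀ F : Mat2, 0 < F.det → W F = g (NN F ^ 2 / F.det) := by
      intro F hF
      obtain ⟨c1, s1, c2, s2, a, b, hcs1, hcs2, hb, hba, hFe, hNN, hdet⟩ := svd2 F hF
      have ha : 0 < a := lt_of_lt_of_le hb hba
      have hab : 0 < a * b := mul_pos ha hb
      have w1 : W F = W (diag2 a b) := by
        rw [hFe]
        exact hOI (diag2 a b) (by rw [diag2_det]; exact hab) _ _
          (rot_mem_SO2 hcs1) (rot_mem_SO2 hcs2)
      have hscale : b • diag2 (a/b) 1 = diag2 a b := by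
        unfold diag2
        ext i j
        fin_cases i <;> fin_cases j <;> simp [Matrix.smul_apply, smul_eq_mul] <;> field_simp
      have w2 : W (diag2 a b) = h (a/b) := by
        rw [← hscale]
        exact hIso (diag2 (a/b) 1) (by rw [diag2_det, mul_one]; positivity) b hb
      have harg : NN F ^ 2 / F.det = a/b := by
        rw [hNN, hdet]
        rw [pow_two]
        rw [show a * a / (a * b) = a / b by
          field_simp]
      have hdivge : (1:ℝ) ≤ a/b := (one_le_div hb).mpr hba
      rw [w1, w2, harg, hg]
      simp only
      rw [max_eq_left hdivge]
    -- the polyconvex function P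
    refine ⟨fun z => if 0 < z.2 then ((g (NN z.1 ^ 2 / z.2) : ℝ) : EReal) else ⊤, ?_, ?_⟩
    · intro x y a b ha hb hab
      beta_reduce
      rcases eq_or_lt_of_le ha with rfl|ha'
      · have hb1 : b = 1 := by linarith
        subst hb1
        simp [zero_smul, one_smul, zero_add]
      rcases eq_or_lt_of_le hb with rfl|hb'
      · have ha1 : a = 1 := by linarith
        subst ha1
        simp [zero_smul, one_smul, add_zero]
      by_cases hx2 : 0 < x.2
      · by_cases hy2 : 0 < y.2
        · have hD : 0 < (a • x + b • y).2 := by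
            have : (a • x + b • y).2 = a * x.2 + b * y.2 := by
              simp [Prod.smul_snd, smul_eq_mul]
            rw [this]; nlinarith [mul_pos ha' hx2, mul_pos hb' hy2]
          have hfst : (a • x + b • y).1 = a • x.1 + b • y.1 := rfl
          have hsnd : (a • x + b • y).2 = a * x.2 + b * y.2 := by
            simp [Prod.smul_snd, smul_eq_mul]
          rw [if_pos hD, if_pos hx2, if_pos hy2]
          rw [show ((a:EReal) * ((g (NN x.1 ^ 2 / x.2) : ℝ) : EReal)
              + (b:EReal) * ((g (NN y.1 ^ 2 / y.2) : ℝ) : EReal))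
              = ((a * g (NN x.1 ^ 2 / x.2) + b * g (NN y.1 ^ 2 / y.2) : ℝ) : EReal) by
            rw [← EReal.coe_mul, ← EReal.coe_mul, ← EReal.coe_add]]
          rw [EReal.coe_le_coe_iff]
          -- the real inequality
          have hNle : NN ((a • x + b • y).1) ≤ a * NN x.1 + b * NN y.1 := by
            rw [hfst]; exact NN_comb x.1 y.1 a b ha hb
          have hN0 : 0 ≤ NN ((a • x + b • y).1) := NN_nonneg _
          have hD' : 0 < a * x.2 + b * y.2 := by nlinarith [mul_pos ha' hx2, mul_pos hb' hy2]
          have step1 : NN ((a • x + b • y).1) ^ 2 / ((a • x + b • y).2)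
              ≤ (a * NN x.1 + b * NN y.1)^2 / (a * x.2 + b * y.2) := by
            rw [hsnd]
            exact (div_le_div_iff_of_pos_right hD').mpr (pow_le_pow_left₀ hN0 hNle 2)
          have step2 : (a * NN x.1 + b * NN y.1)^2 / (a * x.2 + b * y.2)
              ≤ a * (NN x.1 ^2 / x.2) + b * (NN y.1 ^2 / y.2) :=
            qol a b (NN x.1) (NN y.1) x.2 y.2 ha hb hx2 hy2 hD'
          have := hgconv (NN x.1 ^ 2 / x.2) (NN y.1 ^ 2 / y.2) a b ha hb hab
          have hmonoapp : g (NN ((a • x + b • y).1) ^ 2 / ((a • x + b • y).2))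
              ≤ g (a * (NN x.1 ^ 2 / x.2) + b * (NN y.1 ^ 2 / y.2)) :=
            hgmono (le_trans step1 step2)
          exact le_trans hmonoapp this
        · -- y.2 ≤ 0 : right side is ⊤
          rw [if_neg hy2]
          have hbt : (b:EReal) * ⊤ = ⊤ := EReal.coe_mul_top_of_pos hb'
          rw [hbt, EReal.add_top_of_ne_bot]
          · exact le_top
          · by_cases hx2' : 0 < x.2
            · rw [if_pos hx2', ← EReal.coe_mul]; exact EReal.coe_ne_bot _
            · rw [if_neg hx2']
              rw [EReal.coe_mul_top_of_pos ha']
              simp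
      · -- x.2 ≤ 0 : right side is ⊤
        rw [if_neg hx2]
        have : (a:EReal) * ⊤ = ⊤ := EReal.coe_mul_top_of_pos ha'
        rw [this]
        rw [EReal.top_add_of_ne_bot]
        · exact le_top
        · by_cases hy2' : 0 < y.2
          · rw [if_pos hy2', ← EReal.coe_mul]; exact EReal.coe_ne_bot _
          · rw [if_neg hy2']
            rw [EReal.coe_mul_top_of_pos hb']
            simp
    · intro F hF
      simp only [if_pos hF]
      exact congrArg _ (hrep F hF)
end
end

section
/- Let W : GL⁺(2) → ℝ be objective, isotropic and isochoric, and let z : [1,∞) → ℝ be the function defined by z(r) = W(diag(r + √(r² − 1), 1)), so that W(F) = z(‖F‖²/(2·det F)) for all F ∈ GL⁺(2) (Frobenius norm). If z is twice continuously differentiable, then the following are equivalent: (i) W is polyconvex; (ii) W is rank-one convex; (iii) (r² − 1)·(r + √(r² − 1))·z''(r) + z'(r) ≥ 0 for all r > 1. -/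
open Matrix Set

noncomputable section

open Filter

/-! ### Auxiliary algebra -/

lemma frobSq_eq (X : Mat2) : frobSq X = X 0 0^2 + X 0 1^2 + X 1 0^2 + X 1 1^2 := by
  simp [frobSq, Fin.sum_univ_two]; ring

lemma det_eq (X : Mat2) : X.det = X 0 0 * X 1 1 - X 0 1 * X 1 0 := Matrix.det_fin_two X

lemma det_affine (F : Mat2) (ξ η : Fin 2 → ℝ) (t : ℝ) :
    (F + t • vecMulVec ξ η).det = (1-t) * F.det + t * (F + vecMulVec ξ η).det := by
  simp [Matrix.det_fin_two, Matrix.add_apply, Matrix.smul_apply, vecMulVec_apply]; ring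

lemma det_diag2 (u : ℝ) : (diag2 u 1).det = u := by
  simp [diag2, Matrix.det_fin_two]

lemma frobSq_diag2 (u : ℝ) : frobSq (diag2 u 1) = u^2 + 1 := by
  simp [frobSq_eq, diag2]

lemma diag2_line (x y t : ℝ) :
    diag2 x 1 + t • vecMulVec ![y - x, 0] ![1, 0] = diag2 (x + t*(y-x)) 1 := by
  ext i j
  fin_cases i <;> fin_cases j <;>
    simp [diag2, Matrix.add_apply, Matrix.smul_apply, vecMulVec_apply] <;> ring

/-! ### The largest eigenvalue of `XᵀX` -/

def Lam (X : Mat2) : ℝ := (frobSq X + Real.sqrt ((frobSq X)^2 - 4 * X.det^2)) / 2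

lemma frobSq_nonneg (X : Mat2) : 0 ≤ frobSq X := by rw [frobSq_eq]; positivity

lemma two_det_le_frobSq (X : Mat2) : 2 * X.det ≤ frobSq X := by
  rw [frobSq_eq, det_eq]; nlinarith [sq_nonneg (X 0 0 - X 1 1), sq_nonneg (X 0 1 + X 1 0)]

lemma neg_two_det_le_frobSq (X : Mat2) : -(2 * X.det) ≤ frobSq X := by
  rw [frobSq_eq, det_eq]; nlinarith [sq_nonneg (X 0 0 + X 1 1), sq_nonneg (X 0 1 - X 1 0)]

lemma discrim_nonneg (X : Mat2) : 0 ≤ (frobSq X)^2 - 4 * X.det^2 := by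
  nlinarith [two_det_le_frobSq X, neg_two_det_le_frobSq X, frobSq_nonneg X]

lemma sqrt_discrim_sq (X : Mat2) :
    Real.sqrt ((frobSq X)^2 - 4 * X.det^2) ^ 2 = (frobSq X)^2 - 4 * X.det^2 :=
  Real.sq_sqrt (discrim_nonneg X)

lemma Lam_nonneg (X : Mat2) : 0 ≤ Lam X := by
  have := frobSq_nonneg X; have := Real.sqrt_nonneg ((frobSq X)^2 - 4 * X.det^2)
  unfold Lam; linarith

lemma frobSq_le_two_Lam (X : Mat2) : frobSq X ≤ 2 * Lam X := by
  have := Real.sqrt_nonneg ((frobSq X)^2 - 4 * X.det^2)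
  unfold Lam; linarith

lemma Lam_quadratic (X : Mat2) :
    Lam X^2 - (X 0 0^2 + X 0 1^2 + X 1 0^2 + X 1 1^2) * Lam X
      + (X 0 0*X 1 1 - X 0 1*X 1 0)^2 = 0 := by
  have h := sqrt_discrim_sq X
  rw [frobSq_eq, det_eq] at h
  unfold Lam
  rw [frobSq_eq, det_eq]
  linear_combination (1/4) * h

lemma Lam_quadratic' (X : Mat2) : Lam X^2 - frobSq X * Lam X + X.det^2 = 0 := by
  have := Lam_quadratic X; rw [← frobSq_eq, ← det_eq] at this; exact this

lemma Lam_bound (X : Mat2) (v0 v1 : ℝ) :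
    (X 0 0*v0 + X 0 1*v1)^2 + (X 1 0*v0 + X 1 1*v1)^2 ≤ Lam X * (v0^2+v1^2) := by
  obtain ⟨a, ha⟩ : ∃ a, a = Lam X - (X 0 0^2 + X 1 0^2) := ⟨_, rfl⟩
  obtain ⟨c, hc⟩ : ∃ c, c = Lam X - (X 0 1^2 + X 1 1^2) := ⟨_, rfl⟩
  obtain ⟨b, hb⟩ : ∃ b, b = -(X 0 0 * X 0 1 + X 1 0 * X 1 1) := ⟨_, rfl⟩
  have hq := Lam_quadratic X
  have hprod : a * c = b^2 := by rw [ha, hb, hc]; linear_combination hq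
  have hsum : 0 ≤ a + c := by
    have h2 := frobSq_le_two_Lam X
    rw [frobSq_eq] at h2
    rw [ha, hc]; linarith
  have ha0 : 0 ≤ a := by nlinarith [sq_nonneg b]
  have hc0 : 0 ≤ c := by nlinarith [sq_nonneg b]
  have key : 0 ≤ a * v0^2 + 2*b*v0*v1 + c * v1^2 := by
    rcases eq_or_lt_of_le ha0 with h0 | hpos
    · have hb0 : b = 0 := by nlinarith
      rw [← h0, hb0]; have := mul_nonneg hc0 (sq_nonneg v1); linarith
    · nlinarith [sq_nonneg (a*v0 + b*v1)]
  have hexpand : Lam X * (v0^2+v1^2) - ((X 0 0*v0 + X 0 1*v1)^2 + (X 1 0*v0 + X 1 1*v1)^2)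
      = a * v0^2 + 2*b*v0*v1 + c * v1^2 := by
    rw [ha, hb, hc]; ring
  linarith

lemma Lam_exists_max (X : Mat2) : ∃ v0 v1 : ℝ, 0 < v0^2 + v1^2 ∧
    (X 0 0*v0 + X 0 1*v1)^2 + (X 1 0*v0 + X 1 1*v1)^2 = Lam X * (v0^2+v1^2) := by
  obtain ⟨a, ha⟩ : ∃ a, a = Lam X - (X 0 0^2 + X 1 0^2) := ⟨_, rfl⟩
  obtain ⟨b, hb⟩ : ∃ b, b = -(X 0 0 * X 0 1 + X 1 0 * X 1 1) := ⟨_, rfl⟩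
  have hq := Lam_quadratic X
  by_cases h0 : a = 0 ∧ b = 0
  · refine ⟨1, 0, by norm_num, ?_⟩
    have h1 : X 0 0^2 + X 1 0^2 = Lam X := by
      have := h0.1; rw [ha] at this; linarith
    rw [← h1]; ring
  · refine ⟨b, -a, ?_, ?_⟩
    · rcases not_and_or.mp h0 with h | h
      · have : 0 < a^2 := lt_of_le_of_ne (sq_nonneg a) (Ne.symm (pow_ne_zero 2 h))
        nlinarith [sq_nonneg b]
      · have : 0 < b^2 := lt_of_le_of_ne (sq_nonneg b) (Ne.symm (pow_ne_zero 2 h))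
        nlinarith [sq_nonneg a]
    · rw [ha, hb]
      linear_combination (-(Lam X - (X 0 0^2 + X 1 0^2))) * hq

lemma Lam_smul (c : ℝ) (X : Mat2) : Lam (c • X) = c^2 * Lam X := by
  have hf : frobSq (c • X) = c^2 * frobSq X := by
    simp [frobSq_eq, Matrix.smul_apply]; ring
  have hd : (c • X).det = c^2 * X.det := by
    rw [Matrix.det_smul]; norm_num
  unfold Lam
  rw [hf, hd]
  have harg : (c^2 * frobSq X)^2 - 4*(c^2 * X.det)^2
      = (c^2)^2 * ((frobSq X)^2 - 4 * X.det^2) := by ring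
  rw [harg, Real.sqrt_mul (by positivity), Real.sqrt_sq (sq_nonneg c)]
  ring

lemma mink (p0 p1 q0 q1 : ℝ) : (p0+q0)^2 + (p1+q1)^2
    ≤ (Real.sqrt (p0^2+p1^2) + Real.sqrt (q0^2+q1^2))^2 := by
  have hP : Real.sqrt (p0^2+p1^2)^2 = p0^2+p1^2 := Real.sq_sqrt (by positivity)
  have hQ : Real.sqrt (q0^2+q1^2)^2 = q0^2+q1^2 := Real.sq_sqrt (by positivity)
  have hcs : (p0*q0 + p1*q1)^2 ≤ (p0^2+p1^2)*(q0^2+q1^2) := by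
    nlinarith [sq_nonneg (p0*q1 - p1*q0)]
  have h1 : p0*q0 + p1*q1 ≤ Real.sqrt (p0^2+p1^2) * Real.sqrt (q0^2+q1^2) := by
    have h2 := Real.sqrt_le_sqrt hcs
    rw [Real.sqrt_mul (by positivity)] at h2
    calc p0*q0 + p1*q1 ≤ |p0*q0 + p1*q1| := le_abs_self _
    _ = Real.sqrt ((p0*q0 + p1*q1)^2) := (Real.sqrt_sq_eq_abs _).symm
    _ ≤ _ := h2
  nlinarith [h1]

lemma sqrtLam_add (X Y : Mat2) :
    Lam (X + Y) ≤ (Real.sqrt (Lam X) + Real.sqrt (Lam Y))^2 := by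
  obtain ⟨v0, v1, hv, hmax⟩ := Lam_exists_max (X + Y)
  have hXY : ∀ i j, (X + Y) i j = X i j + Y i j := fun i j => rfl
  rw [hXY, hXY, hXY, hXY] at hmax
  have hb1 := Lam_bound X v0 v1
  have hb2 := Lam_bound Y v0 v1
  have hm := mink (X 0 0*v0 + X 0 1*v1) (X 1 0*v0 + X 1 1*v1)
      (Y 0 0*v0 + Y 0 1*v1) (Y 1 0*v0 + Y 1 1*v1)
  have e1 : Real.sqrt ((X 0 0*v0 + X 0 1*v1)^2 + (X 1 0*v0 + X 1 1*v1)^2)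
      ≤ Real.sqrt (Lam X) * Real.sqrt (v0^2+v1^2) := by
    rw [← Real.sqrt_mul (Lam_nonneg X)]
    exact Real.sqrt_le_sqrt hb1
  have e2 : Real.sqrt ((Y 0 0*v0 + Y 0 1*v1)^2 + (Y 1 0*v0 + Y 1 1*v1)^2)
      ≤ Real.sqrt (Lam Y) * Real.sqrt (v0^2+v1^2) := by
    rw [← Real.sqrt_mul (Lam_nonneg Y)]
    exact Real.sqrt_le_sqrt hb2
  have hs : Real.sqrt (v0^2+v1^2)^2 = v0^2+v1^2 := Real.sq_sqrt (by positivity)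
  have key : Lam (X + Y) * (v0^2+v1^2)
      ≤ (Real.sqrt (Lam X) + Real.sqrt (Lam Y))^2 * (v0^2+v1^2) := by
    rw [← hmax]
    calc ((X 0 0 + Y 0 0)*v0 + (X 0 1 + Y 0 1)*v1)^2 + ((X 1 0 + Y 1 0)*v0 + (X 1 1 + Y 1 1)*v1)^2
        = ((X 0 0*v0 + X 0 1*v1) + (Y 0 0*v0 + Y 0 1*v1))^2
          + ((X 1 0*v0 + X 1 1*v1) + (Y 1 0*v0 + Y 1 1*v1))^2 := by ring
    _ ≤ (Real.sqrt ((X 0 0*v0 + X 0 1*v1)^2 + (X 1 0*v0 + X 1 1*v1)^2)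
            + Real.sqrt ((Y 0 0*v0 + Y 0 1*v1)^2 + (Y 1 0*v0 + Y 1 1*v1)^2))^2 := hm
    _ ≤ ((Real.sqrt (Lam X) + Real.sqrt (Lam Y)) * Real.sqrt (v0^2+v1^2))^2 := by
        have hnn1 : 0 ≤ Real.sqrt ((X 0 0*v0 + X 0 1*v1)^2 + (X 1 0*v0 + X 1 1*v1)^2) :=
          Real.sqrt_nonneg _
        have hnn2 : 0 ≤ Real.sqrt ((Y 0 0*v0 + Y 0 1*v1)^2 + (Y 1 0*v0 + Y 1 1*v1)^2) :=
          Real.sqrt_nonneg _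
        have : Real.sqrt ((X 0 0*v0 + X 0 1*v1)^2 + (X 1 0*v0 + X 1 1*v1)^2)
            + Real.sqrt ((Y 0 0*v0 + Y 0 1*v1)^2 + (Y 1 0*v0 + Y 1 1*v1)^2)
            ≤ (Real.sqrt (Lam X) + Real.sqrt (Lam Y)) * Real.sqrt (v0^2+v1^2) := by
          rw [add_mul]; exact add_le_add e1 e2
        exact pow_le_pow_left₀ (by linarith) this 2
    _ = (Real.sqrt (Lam X) + Real.sqrt (Lam Y))^2 * (v0^2+v1^2) := by
        rw [mul_pow, hs]
  exact le_of_mul_le_mul_right key hv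

lemma Lam_ge_det {X : Mat2} (h : 0 < X.det) : X.det ≤ Lam X := by
  have h1 := two_det_le_frobSq X
  have h2 := frobSq_le_two_Lam X
  linarith

lemma Lam_graph {X : Mat2} (h : 0 < X.det) :
    1 ≤ Lam X / X.det ∧
    ((Lam X / X.det)^2 + 1)/(2*(Lam X / X.det)) = frobSq X / (2 * X.det) := by
  have hL : 0 < Lam X := lt_of_lt_of_le h (Lam_ge_det h)
  constructor
  · rw [le_div_iff₀ h]; simpa using Lam_ge_det h
  · have hq := Lam_quadratic' X
    field_simp
    ring_nf
    nlinarith [hq]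

/-! ### Calculus of the profile function -/

def kk : ℝ → ℝ := fun s => (s^2+1)/(2*s)
def hprof (z : ℝ → ℝ) : ℝ → ℝ := fun s => z ((s^2+1)/(2*s))

lemma kk_gt_one {s : ℝ} (hs : 1 < s) : 1 < kk s := by
  unfold kk
  rw [lt_div_iff₀ (by linarith)]
  nlinarith [sq_nonneg (s-1)]

lemma kk_ge_one {s : ℝ} (hs : 1 ≤ s) : 1 ≤ kk s := by
  unfold kk
  rw [le_div_iff₀ (by linarith)]
  nlinarith [sq_nonneg (s-1)]

lemma kk_hasDeriv {s : ℝ} (hs : 0 < s) :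
    HasDerivAt kk ((s^2-1)/(2*s^2)) s := by
  have h1 : HasDerivAt (fun s : ℝ => s^2+1) (2*s) s := by
    simpa using ((hasDerivAt_pow 2 s).add_const 1)
  have h2 : HasDerivAt (fun s : ℝ => 2*s) 2 s := by
    simpa using (hasDerivAt_id s).const_mul 2
  have := h1.div h2 (by positivity)
  refine this.congr_deriv ?_
  field_simp
  ring

lemma kk'_hasDeriv {s : ℝ} (hs : 0 < s) :
    HasDerivAt (fun u : ℝ => (u^2-1)/(2*u^2)) (1/s^3) s := by
  have h1 : HasDerivAt (fun u : ℝ => u^2-1) (2*s) s := by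
    simpa using ((hasDerivAt_pow 2 s).sub_const 1)
  have h2 : HasDerivAt (fun u : ℝ => 2*u^2) (2*(2*s)) s := by
    simpa using (hasDerivAt_pow 2 s).const_mul 2
  have := h1.div h2 (by positivity)
  refine this.congr_deriv ?_
  field_simp
  ring

variable {z : ℝ → ℝ}

lemma zdiff (hC2 : ContDiffOn ℝ 2 z (Set.Ici (1:ℝ))) {r : ℝ} (hr : 1 < r) :
    HasDerivAt z (deriv z r) r := by
  have hU : ContDiffOn ℝ 2 z (Set.Ioi (1:ℝ)) := hC2.mono Set.Ioi_subset_Ici_self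
  have := (hU.differentiableOn (by norm_num)).differentiableAt (isOpen_Ioi.mem_nhds hr)
  exact this.hasDerivAt

lemma dz_contdiff (hC2 : ContDiffOn ℝ 2 z (Set.Ici (1:ℝ))) :
    ContDiffOn ℝ 1 (deriv z) (Set.Ioi (1:ℝ)) := by
  have hU : ContDiffOn ℝ 2 z (Set.Ioi (1:ℝ)) := hC2.mono Set.Ioi_subset_Ici_self
  exact hU.deriv_of_isOpen isOpen_Ioi (by norm_num)

lemma dzdiff (hC2 : ContDiffOn ℝ 2 z (Set.Ici (1:ℝ))) {r : ℝ} (hr : 1 < r) :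
    HasDerivAt (deriv z) (deriv (deriv z) r) r := by
  have := ((dz_contdiff hC2).differentiableOn (by norm_num)).differentiableAt
    (isOpen_Ioi.mem_nhds hr)
  exact this.hasDerivAt

lemma ddz_cont (hC2 : ContDiffOn ℝ 2 z (Set.Ici (1:ℝ))) :
    ContinuousOn (deriv (deriv z)) (Set.Ioi (1:ℝ)) :=
  (dz_contdiff hC2).continuousOn_deriv_of_isOpen isOpen_Ioi le_rfl

lemma hprof_hasDeriv (hC2 : ContDiffOn ℝ 2 z (Set.Ici (1:ℝ))) {s : ℝ} (hs : 1 < s) :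
    HasDerivAt (hprof z) (deriv z (kk s) * ((s^2-1)/(2*s^2))) s := by
  have hk := kk_hasDeriv (show (0:ℝ) < s by linarith)
  have hz := zdiff hC2 (kk_gt_one hs)
  exact (hz.comp s hk :)

lemma hprof_deriv (hC2 : ContDiffOn ℝ 2 z (Set.Ici (1:ℝ))) {s : ℝ} (hs : 1 < s) :
    deriv (hprof z) s = deriv z (kk s) * ((s^2-1)/(2*s^2)) :=
  (hprof_hasDeriv hC2 hs).deriv

lemma hprof_hasDeriv2 (hC2 : ContDiffOn ℝ 2 z (Set.Ici (1:ℝ))) {s : ℝ} (hs : 1 < s) :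
    HasDerivAt (deriv (hprof z))
      (deriv (deriv z) (kk s) * ((s^2-1)/(2*s^2))^2 + deriv z (kk s) * (1/s^3)) s := by
  have hev : (fun u => deriv z (kk u) * ((u^2-1)/(2*u^2))) =ᶠ[nhds s] deriv (hprof z) := by
    filter_upwards [isOpen_Ioi.mem_nhds hs] with u hu
    exact (hprof_deriv hC2 hu).symm
  have hk := kk_hasDeriv (show (0:ℝ) < s by linarith)
  have h1 : HasDerivAt (fun u => deriv z (kk u)) (deriv (deriv z) (kk s) * ((s^2-1)/(2*s^2))) s :=
    ((dzdiff hC2 (kk_gt_one hs)).comp s hk :)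
  have h2 := kk'_hasDeriv (show (0:ℝ) < s by linarith)
  have hmul := h1.mul h2
  have := hmul.congr_of_eventuallyEq hev.symm
  refine this.congr_deriv ?_
  ring

lemma hprof_deriv2 (hC2 : ContDiffOn ℝ 2 z (Set.Ici (1:ℝ))) {s : ℝ} (hs : 1 < s) :
    deriv (deriv (hprof z)) s
      = deriv (deriv z) (kk s) * ((s^2-1)/(2*s^2))^2 + deriv z (kk s) * (1/s^3) :=
  (hprof_hasDeriv2 hC2 hs).deriv

lemma iii_eq (hC2 : ContDiffOn ℝ 2 z (Set.Ici (1:ℝ))) {s : ℝ} (hs : 1 < s) :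
    ((kk s)^2 - 1) * (kk s + Real.sqrt ((kk s)^2 - 1)) * deriv (deriv z) (kk s)
        + deriv z (kk s)
      = s^3 * deriv (deriv (hprof z)) s := by
  have hsq : (kk s)^2 - 1 = ((s^2-1)/(2*s))^2 := by
    unfold kk; field_simp; ring
  have hsqrt : Real.sqrt ((kk s)^2 - 1) = (s^2-1)/(2*s) := by
    rw [hsq, Real.sqrt_sq (div_nonneg (by nlinarith) (by linarith))]
  have hsum : kk s + (s^2-1)/(2*s) = s := by
    unfold kk; field_simp; ring
  rw [hprof_deriv2 hC2 hs, hsqrt, hsq, hsum]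
  field_simp

lemma kk_surj {r : ℝ} (hr : 1 < r) :
    1 < r + Real.sqrt (r^2-1) ∧ kk (r + Real.sqrt (r^2-1)) = r := by
  have h0 : (0:ℝ) ≤ r^2 - 1 := by nlinarith
  have hw := Real.sq_sqrt h0
  have hwn := Real.sqrt_nonneg (r^2-1)
  constructor
  · linarith
  · unfold kk
    rw [div_eq_iff (by positivity)]
    nlinarith [hw]

/-! ### Convexity layer -/

lemma ddh_nonneg_of_iii (hC2 : ContDiffOn ℝ 2 z (Set.Ici (1:ℝ)))
    (hiii : ∀ r : ℝ, 1 < r →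
      0 ≤ (r ^ 2 - 1) * (r + Real.sqrt (r ^ 2 - 1)) * deriv (deriv z) r + deriv z r) :
    ∀ s ∈ Set.Ioi (1:ℝ), 0 ≤ deriv (deriv (hprof z)) s := by
  intro s hs
  have hs' : 1 < s := hs
  have h := hiii (kk s) (kk_gt_one hs')
  rw [iii_eq hC2 hs'] at h
  have hs3 : 0 < s^3 := by positivity
  nlinarith [h, hs3]

lemma dh_tendsto (hC2 : ContDiffOn ℝ 2 z (Set.Ici (1:ℝ))) :
    Tendsto (deriv (hprof z)) (nhdsWithin 1 (Set.Ioi 1)) (nhds 0) := by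
  have hdWc : ContinuousOn (derivWithin z (Set.Ici (1:ℝ))) (Set.Ici 1) :=
    hC2.continuousOn_derivWithin (uniqueDiffOn_Ici 1) (by norm_num)
  have hckk : ContinuousAt kk 1 := by
    unfold kk
    exact ContinuousAt.div (by fun_prop) (by fun_prop) (by norm_num)
  have h1 : Tendsto kk (nhdsWithin 1 (Set.Ioi 1)) (nhdsWithin 1 (Set.Ioi 1)) := by
    apply tendsto_nhdsWithin_of_tendsto_nhds_of_eventually_within
    · have h := hckk.tendsto
      have hk1 : kk 1 = 1 := by unfold kk; norm_num
      rw [hk1] at h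
      exact h.mono_left nhdsWithin_le_nhds
    · filter_upwards [self_mem_nhdsWithin] with u hu
      exact kk_gt_one hu
  have h2 : Tendsto (fun u => deriv z (kk u)) (nhdsWithin 1 (Set.Ioi 1))
      (nhds (derivWithin z (Set.Ici 1) 1)) := by
    have hL : Tendsto (derivWithin z (Set.Ici 1)) (nhdsWithin 1 (Set.Ioi 1))
        (nhds (derivWithin z (Set.Ici 1) 1)) :=
      (hdWc 1 Set.self_mem_Ici).mono_left (nhdsWithin_mono 1 Set.Ioi_subset_Ici_self)
    have hcomp := hL.comp h1
    apply Filter.Tendsto.congr' _ hcomp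
    filter_upwards [self_mem_nhdsWithin] with u hu
    exact derivWithin_of_mem_nhds (Ici_mem_nhds (kk_gt_one hu))
  have h3 : Tendsto (fun u : ℝ => (u^2-1)/(2*u^2)) (nhdsWithin 1 (Set.Ioi 1)) (nhds 0) := by
    have hc : ContinuousAt (fun u : ℝ => (u^2-1)/(2*u^2)) 1 :=
      ContinuousAt.div (by fun_prop) (by fun_prop) (by norm_num)
    have h30 := hc.tendsto
    norm_num at h30
    exact h30.mono_left nhdsWithin_le_nhds
  have hmul := h2.mul h3
  rw [mul_zero] at hmul
  apply Filter.Tendsto.congr' _ hmul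
  filter_upwards [self_mem_nhdsWithin] with u hu
  exact (hprof_deriv hC2 hu).symm

lemma dh_nonneg (hC2 : ContDiffOn ℝ 2 z (Set.Ici (1:ℝ)))
    (hdd : ∀ s ∈ Set.Ioi (1:ℝ), 0 ≤ deriv (deriv (hprof z)) s) :
    ∀ s ∈ Set.Ioi (1:ℝ), 0 ≤ deriv (hprof z) s := by
  have hmono : MonotoneOn (deriv (hprof z)) (Set.Ioi 1) := by
    apply monotoneOn_of_deriv_nonneg (convex_Ioi 1)
    · intro x hx
      exact ((hprof_hasDeriv2 hC2 hx).continuousAt).continuousWithinAt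
    · rw [interior_Ioi]
      intro x hx
      exact (hprof_hasDeriv2 hC2 hx).differentiableAt.differentiableWithinAt
    · rw [interior_Ioi]
      intro x hx
      rw [(hprof_hasDeriv2 hC2 hx).deriv]
      have := hdd x hx
      rwa [hprof_deriv2 hC2 hx] at this
  intro s hs
  have hs' : 1 < s := hs
  have hev : ∀ᶠ u in nhdsWithin 1 (Set.Ioi 1), deriv (hprof z) u ≤ deriv (hprof z) s := by
    filter_upwards [Ioo_mem_nhdsGT_of_mem (Set.left_mem_Ico.mpr hs')] with u hu
    exact hmono hu.1 hs (le_of_lt hu.2)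
  exact le_of_tendsto (dh_tendsto hC2) hev

lemma hprof_contOn (hC2 : ContDiffOn ℝ 2 z (Set.Ici (1:ℝ))) :
    ContinuousOn (hprof z) (Set.Ici 1) := by
  have hkc : ContinuousOn (fun s : ℝ => (s^2+1)/(2*s)) (Set.Ici (1:ℝ)) := by
    apply ContinuousOn.div (by fun_prop) (by fun_prop)
    intro x hx
    have hx1 : (1:ℝ) ≤ x := hx
    have : (0:ℝ) < 2*x := by linarith
    exact ne_of_gt this
  exact hC2.continuousOn.comp hkc (fun x hx => kk_ge_one hx)

lemma hconv_of (hC2 : ContDiffOn ℝ 2 z (Set.Ici (1:ℝ)))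
    (hdd : ∀ s ∈ Set.Ioi (1:ℝ), 0 ≤ deriv (deriv (hprof z)) s) :
    ConvexOn ℝ (Set.Ici 1) (hprof z) := by
  apply convexOn_of_deriv2_nonneg (convex_Ici 1) (hprof_contOn hC2)
  · rw [interior_Ici]
    intro x hx
    exact (hprof_hasDeriv hC2 hx).differentiableAt.differentiableWithinAt
  · rw [interior_Ici]
    intro x hx
    exact (hprof_hasDeriv2 hC2 hx).differentiableAt.differentiableWithinAt
  · rw [interior_Ici]
    intro x hx
    exact hdd x hx

lemma hmono_of (hC2 : ContDiffOn ℝ 2 z (Set.Ici (1:ℝ)))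
    (hdd : ∀ s ∈ Set.Ioi (1:ℝ), 0 ≤ deriv (deriv (hprof z)) s) :
    MonotoneOn (hprof z) (Set.Ici 1) := by
  apply monotoneOn_of_deriv_nonneg (convex_Ici 1) (hprof_contOn hC2)
  · rw [interior_Ici]
    intro x hx
    exact (hprof_hasDeriv hC2 hx).differentiableAt.differentiableWithinAt
  · rw [interior_Ici]
    intro x hx
    exact dh_nonneg hC2 hdd x hx

lemma conv_imp_dd (hC2 : ContDiffOn ℝ 2 z (Set.Ici (1:ℝ)))
    (hcv : ConvexOn ℝ (Set.Ioi 1) (hprof z)) :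
    ∀ s ∈ Set.Ioi (1:ℝ), 0 ≤ deriv (deriv (hprof z)) s := by
  intro s hs
  have hs' : 1 < s := hs
  by_contra hneg
  push_neg at hneg
  -- continuity of the second derivative at s
  have hkkc : ContinuousAt kk s := (kk_hasDeriv (show (0:ℝ) < s by linarith)).continuousAt
  have c1 : ContinuousAt (fun u => deriv (deriv z) (kk u)) s :=
    ContinuousAt.comp ((ddz_cont hC2).continuousAt (isOpen_Ioi.mem_nhds (kk_gt_one hs'))) hkkc
  have c2 : ContinuousAt (fun u => deriv z (kk u)) s :=
    ContinuousAt.comp (dzdiff hC2 (kk_gt_one hs')).continuousAt hkkc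
  have c3 : ContinuousAt (fun u : ℝ => ((u^2-1)/(2*u^2))^2) s := by
    apply ContinuousAt.pow
    exact ContinuousAt.div (by fun_prop) (by fun_prop) (by positivity)
  have c4 : ContinuousAt (fun u : ℝ => 1/u^3) s := by
    exact continuousAt_const.div (continuousAt_id.pow 3) (by positivity)
  have hcontG : ContinuousAt
      (fun u => deriv (deriv z) (kk u) * ((u^2-1)/(2*u^2))^2 + deriv z (kk u) * (1/u^3)) s :=
    (c1.mul c3).add (c2.mul c4)
  have heq : (fun u => deriv (deriv z) (kk u) * ((u^2-1)/(2*u^2))^2 + deriv z (kk u) * (1/u^3))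
      =ᶠ[nhds s] deriv (deriv (hprof z)) := by
    filter_upwards [isOpen_Ioi.mem_nhds hs] with u hu
    exact (hprof_deriv2 hC2 hu).symm
  have hcontD : ContinuousAt (deriv (deriv (hprof z))) s := hcontG.congr heq
  have hev : ∀ᶠ u in nhds s, deriv (deriv (hprof z)) u < 0 ∧ u ∈ Set.Ioi (1:ℝ) := by
    apply Filter.Eventually.and
    · exact hcontD.tendsto.eventually_lt_const hneg
    · exact isOpen_Ioi.mem_nhds hs
  obtain ⟨ε, hε, hball⟩ := Metric.eventually_nhds_iff.mp hev
  set x₁ := s - ε/2 with hx₁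
  set x₂ := s + ε/2 with hx₂
  have hsub : ∀ u ∈ Set.Icc x₁ x₂, deriv (deriv (hprof z)) u < 0 ∧ u ∈ Set.Ioi (1:ℝ) := by
    intro u hu
    apply hball
    rw [Real.dist_eq, abs_lt]
    constructor <;> [skip; skip] <;>
      · simp only [hx₁, hx₂] at hu
        cases' hu with hu1 hu2
        linarith
  have hconc : StrictConcaveOn ℝ (Set.Icc x₁ x₂) (hprof z) := by
    apply strictConcaveOn_of_deriv2_neg (convex_Icc _ _)
    · intro u hu
      exact (hprof_hasDeriv hC2 (hsub u hu).2).continuousAt.continuousWithinAt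
    · intro u hu
      rw [interior_Icc] at hu
      exact (hsub u (Set.Ioo_subset_Icc_self hu)).1
  have hm1 : x₁ ∈ Set.Icc x₁ x₂ := Set.left_mem_Icc.mpr (by simp only [hx₁, hx₂]; linarith)
  have hm2 : x₂ ∈ Set.Icc x₁ x₂ := Set.right_mem_Icc.mpr (by simp only [hx₁, hx₂]; linarith)
  have hne : x₁ ≠ x₂ := by simp only [hx₁, hx₂]; intro hc; nlinarith [hc]
  have hlt := hconc.2 hm1 hm2 hne (by norm_num : (0:ℝ) < 1/2) (by norm_num : (0:ℝ) < 1/2)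
    (by norm_num)
  have hle := hcv.2 (hsub x₁ hm1).2 (hsub x₂ hm2).2 (by norm_num : (0:ℝ) ≤ 1/2)
    (by norm_num : (0:ℝ) ≤ 1/2) (by norm_num)
  simp only [smul_eq_mul] at hlt hle
  linarith

/-! ### The extended profile function -/

def hhat (z : ℝ → ℝ) : ℝ → ℝ := fun u => hprof z (max u 1)

lemma hhat_mono (hm : MonotoneOn (hprof z) (Set.Ici 1)) : Monotone (hhat z) := by
  intro u v huv
  exact hm (Set.mem_Ici.mpr (le_max_right u 1)) (Set.mem_Ici.mpr (le_max_right v 1))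
    (max_le_max huv le_rfl)

lemma hhat_convex (hc : ConvexOn ℝ (Set.Ici 1) (hprof z))
    (hm : MonotoneOn (hprof z) (Set.Ici 1)) :
    ∀ u v a b : ℝ, 0 ≤ a → 0 ≤ b → a + b = 1 →
      hhat z (a*u + b*v) ≤ a * hhat z u + b * hhat z v := by
  intro u v a b ha hb hab
  have h1 : max (a*u + b*v) 1 ≤ a * max u 1 + b * max v 1 := by
    apply max_le
    · exact add_le_add (mul_le_mul_of_nonneg_left (le_max_left u 1) ha)
        (mul_le_mul_of_nonneg_left (le_max_left v 1) hb)
    · calc (1:ℝ) = a * 1 + b * 1 := by rw [mul_one, mul_one, hab]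
      _ ≤ a * max u 1 + b * max v 1 :=
        add_le_add (mul_le_mul_of_nonneg_left (le_max_right u 1) ha)
          (mul_le_mul_of_nonneg_left (le_max_right v 1) hb)
  have hmem1 : max u 1 ∈ Set.Ici (1:ℝ) := Set.mem_Ici.mpr (le_max_right u 1)
  have hmem2 : max v 1 ∈ Set.Ici (1:ℝ) := Set.mem_Ici.mpr (le_max_right v 1)
  have hmemc : a * max u 1 + b * max v 1 ∈ Set.Ici (1:ℝ) := by
    rw [Set.mem_Ici]
    calc (1:ℝ) = a * 1 + b * 1 := by rw [mul_one, mul_one, hab]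
    _ ≤ _ := add_le_add (mul_le_mul_of_nonneg_left (le_max_right u 1) ha)
          (mul_le_mul_of_nonneg_left (le_max_right v 1) hb)
  calc hhat z (a*u + b*v) = hprof z (max (a*u+b*v) 1) := rfl
  _ ≤ hprof z (a * max u 1 + b * max v 1) :=
      hm (Set.mem_Ici.mpr (le_max_right _ 1)) hmemc h1
  _ ≤ a * hprof z (max u 1) + b * hprof z (max v 1) := by
      have := hc.2 hmem1 hmem2 ha hb hab
      rw [smul_eq_mul, smul_eq_mul] at this
      exact this
  _ = a * hhat z u + b * hhat z v := rfl

/-- for objective, isotropic, isochoric `W` with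
`z(r) = W(diag(r + √(r²−1), 1))`, so that `W F = z(‖F‖²/(2 det F))` on GL⁺(2),
and `z` twice continuously differentiable on `[1,∞)`:
polyconvexity, rank-one convexity and `(r²−1)(r+√(r²−1))z''(r) + z'(r) ≥ 0`
for all `r > 1` are equivalent. -/
theorem isochoric_tfae_distortion (W : Mat2 → ℝ)
    (hOI : ObjectiveIsotropic W) (hIso : Isochoric W)
    (z : ℝ → ℝ) (hz : ∀ r : ℝ, z r = W (diag2 (r + Real.sqrt (r ^ 2 - 1)) 1))
    (hzW : ∀ F : Mat2, 0 < F.det → W F = z (frobSq F / (2 * F.det)))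
    (hC2 : ContDiffOn ℝ 2 z (Set.Ici (1:ℝ))) :
    List.TFAE
      [Polyconvex W,
       RankOneConvex W,
       ∀ r : ℝ, 1 < r →
         0 ≤ (r ^ 2 - 1) * (r + Real.sqrt (r ^ 2 - 1)) * deriv (deriv z) r
             + deriv z r] := by
  have hWh : ∀ u : ℝ, 0 < u → W (diag2 u 1) = hprof z u := by
    intro u hu
    have hdet : 0 < (diag2 u 1).det := by rw [det_diag2]; exact hu
    rw [hzW _ hdet, det_diag2, frobSq_diag2]
    rfl
  tfae_have 1 → 2 := by
    rintro ⟨P, hPconv, hPeq⟩ F hF ξ η θ hθ hdet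
    have hFR : 0 < (F + vecMulVec ξ η).det := by
      have := hdet 1 ⟨zero_le_one, le_refl 1⟩
      rwa [one_smul] at this
    have hθ1 : (0:ℝ) ≤ 1 - θ := by linarith [hθ.2]
    have hdθ : 0 < (F + (1-θ) • vecMulVec ξ η).det :=
      hdet (1-θ) ⟨hθ1, by linarith [hθ.1]⟩
    have haff := det_affine F ξ η (1-θ)
    have h1 : θ • F + (1-θ) • (F + vecMulVec ξ η) = F + (1-θ) • vecMulVec ξ η := by
      ext i j
      simp only [Matrix.add_apply, Matrix.smul_apply, smul_eq_mul]
      ring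
    have h2 : θ * F.det + (1-θ) * (F + vecMulVec ξ η).det
        = (F + (1-θ) • vecMulVec ξ η).det := by rw [haff]; ring
    have hineq := hPconv (F, F.det) (F + vecMulVec ξ η, (F + vecMulVec ξ η).det)
      θ (1-θ) hθ.1 hθ1 (by ring)
    have hcomb : θ • ((F, F.det) : Mat2 × ℝ)
          + (1-θ) • ((F + vecMulVec ξ η, (F + vecMulVec ξ η).det) : Mat2 × ℝ)
        = ((F + (1-θ) • vecMulVec ξ η, (F + (1-θ) • vecMulVec ξ η).det) : Mat2 × ℝ) := by
      simp only [Prod.smul_mk, Prod.mk_add_mk, smul_eq_mul]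
      rw [h1, h2]
    rw [hcomb, ← hPeq _ hF, ← hPeq _ hFR, ← hPeq _ hdθ] at hineq
    have hcast : ((W (F + (1-θ) • vecMulVec ξ η) : ℝ) : EReal)
        ≤ ((θ * W F + (1-θ) * W (F + vecMulVec ξ η) : ℝ) : EReal) := by
      rw [EReal.coe_add, EReal.coe_mul, EReal.coe_mul]
      exact hineq
    exact_mod_cast hcast
  tfae_have 2 → 3 := by
    intro hroc r hr
    obtain ⟨hs1, hks⟩ := kk_surj hr
    have key : ∀ x y a b : ℝ, 1 < x → 1 < y → x ≤ y → 0 ≤ a → 0 ≤ b → a + b = 1 →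
        hprof z (a*x + b*y) ≤ a * hprof z x + b * hprof z y := by
      intro x y a b hx hy hxy ha hb hab
      have hdet : ∀ t ∈ Set.Icc (0:ℝ) 1,
          0 < (diag2 x 1 + t • vecMulVec ![y - x, 0] ![1, 0]).det := by
        intro t ht
        rw [diag2_line, det_diag2]
        nlinarith [mul_nonneg ht.1 (sub_nonneg.mpr hxy)]
      have hmain := hroc (diag2 x 1) (by rw [det_diag2]; linarith) ![y - x, 0] ![1, 0] a
        ⟨ha, by linarith⟩ hdet
      have e1 : diag2 x 1 + vecMulVec ![y - x, 0] ![1, 0] = diag2 y 1 := by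
        have h := diag2_line x y 1
        rw [one_smul] at h
        rw [h]
        congr 1
        ring
      rw [e1, diag2_line x y (1-a)] at hmain
      have hpos1 : (0:ℝ) < x + (1-a)*(y-x) := by
        nlinarith [mul_nonneg (sub_nonneg.mpr (show a ≤ 1 by linarith)) (sub_nonneg.mpr hxy)]
      have hpos2 : (0:ℝ) < x := by linarith
      have hpos3 : (0:ℝ) < y := by linarith
      rw [hWh _ hpos1, hWh _ hpos2, hWh _ hpos3] at hmain
      have hb' : b = 1 - a := by linarith
      subst hb'
      rw [show a*x + (1-a)*y = x + (1-a)*(y-x) by ring]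
      exact hmain
    have hcv : ConvexOn ℝ (Set.Ioi 1) (hprof z) := by
      constructor
      · exact convex_Ioi 1
      · intro x hx y hy a b ha hb hab
        simp only [smul_eq_mul]
        rcases le_total x y with hxy | hxy
        · exact key x y a b hx hy hxy ha hb hab
        · have h := key y x b a hy hx hxy hb ha (by linarith)
          calc hprof z (a*x + b*y) = hprof z (b*y + a*x) := by rw [add_comm (a*x) (b*y)]
          _ ≤ b * hprof z y + a * hprof z x := h
          _ = a * hprof z x + b * hprof z y := by ring
    have hdd := conv_imp_dd hC2 hcv _ (Set.mem_Ioi.mpr hs1)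
    have hid := iii_eq hC2 hs1
    rw [hks] at hid
    rw [hid]
    have h0 : (0:ℝ) < r + Real.sqrt (r^2-1) := by linarith
    have hs0 : (0:ℝ) < (r + Real.sqrt (r^2-1))^3 := by positivity
    exact mul_nonneg (le_of_lt hs0) hdd
  tfae_have 3 → 1 := by
    intro hiii
    have hdd := ddh_nonneg_of_iii hC2 hiii
    have hcx := hconv_of hC2 hdd
    have hmn := hmono_of hC2 hdd
    refine ⟨fun p => if 0 < p.2 then ((hhat z (Lam p.1 / p.2) : ℝ) : EReal) else ⊤, ?_, ?_⟩
    · intro x y a b ha hb hab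
      dsimp only
      rcases eq_or_lt_of_le ha with ha0 | ha'
      · have hb1 : b = 1 := by linarith
        rw [← ha0, hb1]
        simp only [zero_smul, one_smul, zero_add]
        rw [EReal.coe_zero, EReal.coe_one, zero_mul, one_mul, zero_add]
      · rcases eq_or_lt_of_le hb with hb0 | hb'
        · have ha1 : a = 1 := by linarith
          rw [← hb0, ha1]
          simp only [zero_smul, one_smul, add_zero]
          rw [EReal.coe_zero, EReal.coe_one, zero_mul, one_mul, add_zero]
        · have hac : (0:EReal) < (a:EReal) := by exact_mod_cast ha'
          have hbc : (0:EReal) < (b:EReal) := by exact_mod_cast hb'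
          by_cases hx2 : 0 < x.2
          · by_cases hy2 : 0 < y.2
            · -- main case
              have hδc : 0 < a * x.2 + b * y.2 := add_pos (mul_pos ha' hx2) (mul_pos hb' hy2)
              have hc2 : 0 < (a • x + b • y).2 := hδc
              rw [if_pos hx2, if_pos hy2, if_pos hc2]
              have harg1 : (a • x + b • y).1 = a • x.1 + b • y.1 := rfl
              have harg2 : (a • x + b • y).2 = a * x.2 + b * y.2 := rfl
              rw [harg1, harg2]
              rw [← EReal.coe_mul, ← EReal.coe_mul, ← EReal.coe_add, EReal.coe_le_coe_iff]
              obtain ⟨u, hun, hu2⟩ : ∃ u : ℝ, 0 ≤ u ∧ Lam x.1 = u^2 :=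
                ⟨Real.sqrt (Lam x.1), Real.sqrt_nonneg _, (Real.sq_sqrt (Lam_nonneg _)).symm⟩
              obtain ⟨v, hvn, hv2⟩ : ∃ v : ℝ, 0 ≤ v ∧ Lam y.1 = v^2 :=
                ⟨Real.sqrt (Lam y.1), Real.sqrt_nonneg _, (Real.sq_sqrt (Lam_nonneg _)).symm⟩
              rw [hu2, hv2]
              have st1 : Lam (a • x.1 + b • y.1) ≤ (a * u + b * v)^2 := by
                have h1 := sqrtLam_add (a • x.1) (b • y.1)
                rw [Lam_smul a, Lam_smul b, hu2, hv2,
                  Real.sqrt_mul (sq_nonneg a), Real.sqrt_sq ha'.le, Real.sqrt_sq hun,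
                  Real.sqrt_mul (sq_nonneg b), Real.sqrt_sq hb'.le, Real.sqrt_sq hvn] at h1
                exact h1
              have st2 : (a * u + b * v)^2 / (a*x.2 + b*y.2)
                  ≤ a * (u^2 / x.2) + b * (v^2 / y.2) := by
                rw [div_le_iff₀ hδc]
                have e : a * (u^2 / x.2) + b * (v^2 / y.2)
                    = (a * u^2 * y.2 + b * v^2 * x.2)/(x.2*y.2) := by
                  field_simp
                rw [e, div_mul_eq_mul_div, le_div_iff₀ (mul_pos hx2 hy2)]
                nlinarith [mul_nonneg (mul_nonneg ha'.le hb'.le) (sq_nonneg (u*y.2 - v*x.2))]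
              have st3 : Lam (a • x.1 + b • y.1) / (a*x.2+b*y.2)
                  ≤ a * (u^2/x.2) + b * (v^2/y.2) :=
                le_trans ((div_le_div_iff_of_pos_right hδc).mpr st1) st2
              calc hhat z (Lam (a • x.1 + b • y.1)/(a*x.2+b*y.2))
                  ≤ hhat z (a * (u^2/x.2) + b * (v^2/y.2)) := hhat_mono hmn st3
                _ ≤ a * hhat z (u^2/x.2) + b * hhat z (v^2/y.2) :=
                  hhat_convex hcx hmn _ _ a b ha'.le hb'.le hab
            · rw [if_neg hy2, EReal.mul_top_of_pos hbc]
              by_cases hx2' : 0 < x.2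
              · rw [if_pos hx2', ← EReal.coe_mul, EReal.coe_add_top]
                exact le_top
              · rw [if_neg hx2', EReal.mul_top_of_pos hac, EReal.top_add_top]
                exact le_top
          · rw [if_neg hx2, EReal.mul_top_of_pos hac]
            by_cases hy2 : 0 < y.2
            · rw [if_pos hy2, ← EReal.coe_mul, EReal.top_add_coe]
              exact le_top
            · rw [if_neg hy2, EReal.mul_top_of_pos hbc, EReal.top_add_top]
              exact le_top
    · intro F hF
      dsimp only
      have hF2 : (0:ℝ) < ((F, F.det) : Mat2 × ℝ).2 := hF
      rw [if_pos hF2]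
      obtain ⟨hρ1, hρk⟩ := Lam_graph hF
      have hWF : W F = hhat z (Lam F / F.det) := by
        rw [hzW F hF, ← hρk]
        unfold hhat
        rw [max_eq_left hρ1]
        rfl
      exact_mod_cast hWF
  tfae_finish
end
end
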